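/- Let f = (f₁, f₂): I² → I² be a bijection whose inverse f⁻¹ is Lipschitz continuous with Lipschitz constant K. Then there exists C ∈ (0, ∞) such that for all y, y′ ∈ I and j ∈ {1,2}, the Hausdorff distance between the level-sets satisfies d_Haus(L_{f_j}(y), L_{f_j}(y′)) ≤ C |y − y′|. -/

import Mathlib

noncomputable section

abbrev E2 := EuclideanSpace ℝ (Fin 2)

def Isq : Set E2 := {x | x 0 ∈ Set.Icc (-1:ℝ) 1 ∧ x 1 ∈ Set.Icc (-1:ℝ) 1}

def levelSet (f : E2 → E2) (j : Fin 2) (y : ℝ) : Set E2 :=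
  {x ∈ Isq | f x j = y}

lemma key (f g : E2 → E2) (K : ℝ)
    (hf : Set.BijOn f Isq Isq)
    (hgf : ∀ x ∈ Isq, g (f x) = x) (hfg : ∀ y ∈ Isq, f (g y) = y)
    (hgLip : ∀ u ∈ Isq, ∀ v ∈ Isq, ‖g u - g v‖ ≤ K * ‖u - v‖)
    (y y' : ℝ) (hy' : y' ∈ Set.Icc (-1:ℝ) 1) (j : Fin 2)
    (x : E2) (hx : x ∈ levelSet f j y) :
    ∃ x' ∈ levelSet f j y', dist x x' ≤ (|K| + 1) * |y - y'| := by
  obtain ⟨hxI, hxj⟩ := hx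
  set u : E2 := f x with hu
  have huI : u ∈ Isq := hf.mapsTo hxI
  set u' : E2 := WithLp.toLp 2 (Function.update u j y') with hu'
  have hu'I : u' ∈ Isq := by
    constructor
    · by_cases h : (0 : Fin 2) = j
      · rw [hu', h, WithLp.ofLp_toLp, Function.update_self]; exact hy'
      · rw [hu', WithLp.ofLp_toLp, Function.update_of_ne h]; exact huI.1
    · by_cases h : (1 : Fin 2) = j
      · rw [hu', h, WithLp.ofLp_toLp, Function.update_self]; exact hy'
      · rw [hu', WithLp.ofLp_toLp, Function.update_of_ne h]; exact huI.2
  obtain ⟨z, hzI, hzf⟩ := hf.surjOn hu'I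
  have hgu' : g u' = z := by rw [← hzf, hgf z hzI]
  refine ⟨g u', ⟨hgu' ▸ hzI, ?_⟩, ?_⟩
  · rw [hfg u' hu'I]; simp [hu']
  · have hx' : x = g u := (hgf x hxI).symm
    have hdiff : u - u' = EuclideanSpace.single j (y - y') := by
      ext k
      by_cases h : k = j
      · subst h; simp [hu', ← hxj]
      · simp [hu', Function.update_of_ne h, EuclideanSpace.single_apply, h]
    have hnorm : ‖u - u'‖ = |y - y'| := by
      rw [hdiff, EuclideanSpace.norm_single]; rfl
    calc dist x (g u') = ‖g u - g u'‖ := by rw [dist_eq_norm, hx']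
      _ ≤ K * ‖u - u'‖ := hgLip u huI u' hu'I
      _ ≤ (|K| + 1) * ‖u - u'‖ := by
          apply mul_le_mul_of_nonneg_right _ (norm_nonneg _)
          linarith [le_abs_self K]
      _ = (|K| + 1) * |y - y'| := by rw [hnorm]

theorem stmt_4 (f g : E2 → E2) (K : ℝ)
    (hf : Set.BijOn f Isq Isq)
    (hgf : ∀ x ∈ Isq, g (f x) = x) (hfg : ∀ y ∈ Isq, f (g y) = y)
    (hgLip : ∀ u ∈ Isq, ∀ v ∈ Isq, ‖g u - g v‖ ≤ K * ‖u - v‖) :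
    ∃ C > (0:ℝ),
    ∀ y ∈ Set.Icc (-1:ℝ) 1, ∀ y' ∈ Set.Icc (-1:ℝ) 1, ∀ j : Fin 2,
      Metric.hausdorffDist (levelSet f j y) (levelSet f j y') ≤ C * |y - y'| := by
  refine ⟨|K| + 1, by positivity, fun y hy y' hy' j => ?_⟩
  apply Metric.hausdorffDist_le_of_mem_dist (by positivity)
  · intro x hx
    exact key f g K hf hgf hfg hgLip y y' hy' j x hx
  · intro x hx
    obtain ⟨x', hx', hd⟩ := key f g K hf hgf hfg hgLip y' y hy j x hx
    exact ⟨x', hx', by rwa [abs_sub_comm] at hd⟩
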